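/- Let 𝕏 be a zero-dimensional Polish space, (C^ε_i)_{(ε,i)∈2×ω} a family of pairwise disjoint clopen subsets of 𝕏, X a zero-dimensional Polish space, and A a relation on X. Then either (a) there is a continuous map c: X → ω with c(x) ≠ c(y) for all (x,y) ∈ A, or (b) there is a continuous map f: 𝕏 → X such that (f(y), f(z)) ∈ A whenever (y,z) ∈ ⋃_i C⁰_i × C¹_i. -/
import Mathlib


/-- dichotomy. Given a pairwise disjoint clopen family `(C^ε_i)` on a
zero-dimensional Polish space `𝕏`, a zero-dimensional Polish space `X` and a
relation `A` on `X`, either `(X, A)` has a continuous countable coloring, or there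
is a continuous homomorphism from `(𝕏, ⋃_i C⁰_i × C¹_i)` into `(X, A)`. -/
theorem stmt5 {𝕏 X : Type*} [TopologicalSpace 𝕏] [PolishSpace 𝕏]
    [TopologicalSpace X] [PolishSpace X]
    (h𝕏 : TopologicalSpace.IsTopologicalBasis {s : Set 𝕏 | IsClopen s})
    (hX : TopologicalSpace.IsTopologicalBasis {s : Set X | IsClopen s})
    (C : Bool → ℕ → Set 𝕏) (hclopen : ∀ ε i, IsClopen (C ε i))
    (hdisj : ∀ ε i ε' i', (ε, i) ≠ (ε', i') → Disjoint (C ε i) (C ε' i'))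
    (A : Set (X × X)) :
    (∃ c : X → ℕ, Continuous c ∧ ∀ x y, (x, y) ∈ A → c x ≠ c y) ∨
    (∃ f : 𝕏 → X, Continuous f ∧
      ∀ y z, (∃ i, y ∈ C false i ∧ z ∈ C true i) → (f y, f z) ∈ A) := by
  classical
  by_cases hD : ∃ p : X, ∀ U ∈ nhds p, ∃ a ∈ U, ∃ b ∈ U, (a, b) ∈ A
  · -- Right disjunct
    right
    obtain ⟨p, hp⟩ := hD
    obtain ⟨s, hs⟩ := Filter.exists_antitone_basis (nhds p)
    have hpair : ∀ i : ℕ, ∃ a ∈ s i, ∃ b ∈ s i, (a, b) ∈ A := fun i =>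
      hp (s i) (hs.toHasBasis.mem_of_mem trivial)
    choose a ha b hb hab using hpair
    set f : 𝕏 → X := fun x =>
      if h : ∃ q : Bool × ℕ, x ∈ C q.1 q.2 then
        cond h.choose.1 (b h.choose.2) (a h.choose.2) else p with hf
    have hval : ∀ ε i x, x ∈ C ε i → f x = cond ε (b i) (a i) := by
      intro ε i x hx
      have h : ∃ q : Bool × ℕ, x ∈ C q.1 q.2 := ⟨(ε, i), hx⟩
      have hx' := h.choose_spec
      have heq : h.choose = (ε, i) := by
        by_contra hne
        have hne' : (h.choose.1, h.choose.2) ≠ (ε, i) := by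
          simpa using hne
        exact Set.disjoint_left.mp (hdisj h.choose.1 h.choose.2 ε i hne') hx' hx
      simp only [hf, dif_pos h, heq]
    have hcont : Continuous f := by
      rw [continuous_iff_continuousAt]
      intro x
      by_cases hx : ∃ q : Bool × ℕ, x ∈ C q.1 q.2
      · obtain ⟨⟨ε, i⟩, hxC⟩ := hx
        have hev : (fun _ : 𝕏 => f x) =ᶠ[nhds x] f := by
          filter_upwards [(hclopen ε i).isOpen.mem_nhds hxC] with y hy
          rw [hval ε i y hy, hval ε i x hxC]
        exact continuousAt_const.congr hev
      · have hfx : f x = p := by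
          simp only [hf, dif_neg hx]
        rw [ContinuousAt, hfx, Filter.tendsto_def]
        intro W hW
        obtain ⟨N, -, hN⟩ := hs.toHasBasis.mem_iff.mp hW
        have hpN : ∀ i, p ∈ s i := fun i =>
          mem_of_mem_nhds (hs.toHasBasis.mem_of_mem trivial)
        have hOopen : IsOpen (⋂ q ∈ {q : Bool × ℕ | q.2 < N}, (C q.1 q.2)ᶜ) := by
          refine Set.Finite.isOpen_biInter ?_ ?_
          · have : {q : Bool × ℕ | q.2 < N} ⊆ Set.univ ×ˢ Set.Iio N := by
              intro q hq; exact ⟨trivial, hq⟩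
            exact Set.Finite.subset ((Set.finite_univ).prod (Set.finite_Iio N)) this
          · intro q _
            exact (hclopen q.1 q.2).isClosed.isOpen_compl
        have hxO : x ∈ ⋂ q ∈ {q : Bool × ℕ | q.2 < N}, (C q.1 q.2)ᶜ := by
          refine Set.mem_biInter ?_
          intro q _
          exact fun hxq => hx ⟨q, hxq⟩
        filter_upwards [hOopen.mem_nhds hxO] with y hy
        show f y ∈ W
        by_cases hyC : ∃ q : Bool × ℕ, y ∈ C q.1 q.2
        · obtain ⟨⟨ε, i⟩, hyq⟩ := hyC
          have hiN : N ≤ i := by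
            by_contra hlt
            push_neg at hlt
            exact (Set.mem_iInter₂.mp hy (ε, i) hlt) hyq
          have hsub : s i ⊆ W := (hs.antitone hiN).trans hN
          rw [hval ε i y hyq]
          cases ε
          · exact hsub (ha i)
          · exact hsub (hb i)
        · have : f y = p := by simp only [hf, dif_neg hyC]
          rw [this]
          exact hN (hpN N)
    refine ⟨f, hcont, ?_⟩
    rintro y z ⟨i, hy, hz⟩
    rw [hval false i y hy, hval true i z hz]
    exact hab i
  · -- Left disjunct
    left
    push_neg at hD
    by_cases hXne : Nonempty X
    · have hV : ∀ x : X, ∃ V : Set X, IsClopen V ∧ x ∈ V ∧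
          ∀ u ∈ V, ∀ v ∈ V, (u, v) ∉ A := by
        intro x
        obtain ⟨U, hU, hind⟩ := hD x
        obtain ⟨V, hVb, hxV, hVU⟩ := hX.mem_nhds_iff.mp hU
        exact ⟨V, hVb, hxV, fun u hu v hv huv => hind u (hVU hu) v (hVU hv) huv⟩
      choose V hVclopen hxV hVind using hV
      obtain ⟨t, htc, htU⟩ := TopologicalSpace.countable_cover_nhds
        (fun x => (hVclopen x).isOpen.mem_nhds (hxV x))
      have hSne : (insert (∅ : Set X) (V '' t)).Nonempty := ⟨∅, Set.mem_insert _ _⟩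
      obtain ⟨g, hg⟩ := ((htc.image V).insert ∅).exists_eq_range hSne
      have hgmem : ∀ n, g n ∈ insert (∅ : Set X) (V '' t) := by
        intro n; rw [hg]; exact Set.mem_range_self n
      have hgclopen : ∀ n, IsClopen (g n) := by
        intro n
        rcases hgmem n with h | ⟨x, -, h⟩
        · rw [h]; exact isClopen_empty
        · rw [← h]; exact hVclopen x
      have hgind : ∀ n, ∀ u ∈ g n, ∀ v ∈ g n, (u, v) ∉ A := by
        intro n
        rcases hgmem n with h | ⟨x, -, h⟩
        · rw [h]; intro u hu; exact absurd hu (Set.notMem_empty u)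
        · rw [← h]; exact hVind x
      have hcov : ∀ x : X, ∃ n, x ∈ g n := by
        intro x
        have : x ∈ ⋃ y ∈ t, V y := htU ▸ Set.mem_univ x
        obtain ⟨y, hyt, hxy⟩ := Set.mem_iUnion₂.mp this
        have : V y ∈ Set.range g := by
          rw [← hg]; exact Set.mem_insert_of_mem _ ⟨y, hyt, rfl⟩
        obtain ⟨n, hn⟩ := this
        exact ⟨n, hn ▸ hxy⟩
      set c : X → ℕ := fun x => Nat.find (hcov x) with hc
      have hcx : ∀ x, x ∈ g (c x) := fun x => Nat.find_spec (hcov x)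
      have hcmin : ∀ x m, m < c x → x ∉ g m := fun x m hm =>
        Nat.find_min (hcov x) hm
      have hfiber : ∀ n, {x | c x = n} = g n ∩ ⋂ m ∈ Finset.range n, (g m)ᶜ := by
        intro n
        ext x
        simp only [Set.mem_setOf_eq, Set.mem_inter_iff, Set.mem_iInter,
          Finset.mem_range, Set.mem_compl_iff]
        constructor
        · intro h
          exact ⟨h ▸ hcx x, fun m hm => hcmin x m (h ▸ hm)⟩
        · intro ⟨h1, h2⟩
          exact (Nat.find_eq_iff (hcov x)).mpr ⟨h1, fun m hm => h2 m hm⟩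
      have hloc : IsLocallyConstant c := by
        rw [IsLocallyConstant.iff_isOpen_fiber]
        intro n
        rw [show (c ⁻¹' {n}) = {x | c x = n} from rfl, hfiber n]
        refine ((hgclopen n).isOpen).inter ?_
        exact isOpen_biInter_finset fun m _ => (hgclopen m).isClosed.isOpen_compl
      refine ⟨c, hloc.continuous, ?_⟩
      intro x y hxy hcxy
      exact hgind (c y) x (hcxy ▸ hcx x) y (hcx y) hxy
    · exact ⟨fun _ => 0, continuous_const, fun x => (hXne ⟨x⟩).elim⟩
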